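/- Let α > 0 and z ∈ ℂ. Then ∫₀^∞ t·e^(−π·α²·t²)·cos(√π·α·t·z) dt = (e^(−z²/4)/(2π·α²))·₁F₁(−1/2; 1/2; z²/4). -/

import Mathlib

open scoped Real
open MeasureTheory

/-- Rising factorial (Pochhammer symbol) `(a)_n`. -/
noncomputable def poch (a : ℂ) (n : ℕ) : ℂ := (ascPochhammer ℂ n).eval a

/-- Confluent hypergeometric function `₁F₁(a;c;w)`. -/
noncomputable def oneF1 (a c w : ℂ) : ℂ :=
  ∑' n : ℕ, poch a n * w ^ n / (poch c n * n.factorial)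

/-- The hypergeometric function `₂F₂(1,1;3/2,2;w)`. -/
noncomputable def twoF2 (w : ℂ) : ℂ :=
  ∑' n : ℕ, poch 1 n * poch 1 n * w ^ n / (poch (3/2) n * poch 2 n * n.factorial)

/-- The Riemann xi function `ξ(s) = (1/2) s (s-1) π^(-s/2) Γ(s/2) ζ(s)`. -/
noncomputable def xiR (s : ℂ) : ℂ :=
  (1 / 2) * s * (s - 1) * (π : ℂ) ^ (-s / 2) * Complex.Gamma (s / 2) * riemannZeta s

/-- The Riemann Xi function `Ξ(t) = ξ(1/2 + i t)`. -/
noncomputable def XiR (t : ℂ) : ℂ := xiR (1 / 2 + Complex.I * t)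

/-- `ρ(x,z,s) = x^(1/2-s) e^(-z²/8) ₁F₁((1-s)/2; 1/2; z²/4)`. -/
noncomputable def rhoF (x : ℝ) (z s : ℂ) : ℂ :=
  (x : ℂ) ^ ((1 : ℂ) / 2 - s) * Complex.exp (-z ^ 2 / 8) *
    oneF1 ((1 - s) / 2) (1 / 2) (z ^ 2 / 4)

/-- `∇(x,z,s) = ρ(x,z,s) + ρ(x,z,1-s)`. -/
noncomputable def nablaF (x : ℝ) (z s : ℂ) : ℂ := rhoF x z s + rhoF x z (1 - s)

/-- The digamma function `ψ(x) = Γ'(x)/Γ(x)`. -/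
noncomputable def digamma (x : ℝ) : ℝ := deriv Real.Gamma x / Real.Gamma x

/-- The modified Bessel function of order zero, `K₀(x) = ∫₀^∞ e^(-x cosh u) du`. -/
noncomputable def besselK0 (x : ℝ) : ℝ := ∫ u in Set.Ioi (0 : ℝ), Real.exp (-x * Real.cosh u)


open Set

lemma poch_zero (a : ℂ) : poch a 0 = 1 := by simp [poch]

lemma poch_succ (a : ℂ) (n : ℕ) : poch a (n + 1) = poch a n * (a + n) := by
  simp [poch, ascPochhammer_succ_right]

lemma nat_add_half_ne (n : ℕ) : ((n : ℂ) + 1 / 2) ≠ 0 := by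
  have : ((n : ℂ) + 1 / 2) = (((n : ℝ) + 1 / 2 : ℝ) : ℂ) := by push_cast; ring
  rw [this, Complex.ofReal_ne_zero]
  positivity

lemma nat_sub_half_ne (n : ℕ) : ((n : ℂ) - 1 / 2) ≠ 0 := by
  have : ((n : ℂ) - 1 / 2) = (((n : ℝ) - 1 / 2 : ℝ) : ℂ) := by push_cast; ring
  rw [this, Complex.ofReal_ne_zero]
  rcases Nat.eq_zero_or_pos n with h | h
  · subst h; norm_num
  · have : (1 : ℝ) ≤ (n : ℝ) := by exact_mod_cast h
    intro hc; linarith [sub_eq_zero.mp hc]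

lemma poch_half_ne (n : ℕ) : poch (1 / 2) n ≠ 0 := by
  induction n with
  | zero => simp [poch_zero]
  | succ k ih =>
    rw [poch_succ]
    exact mul_ne_zero ih (by rw [add_comm]; exact nat_add_half_ne k)

lemma pascal_sum (m : ℕ) (a : ℕ → ℂ) :
    ∑ k ∈ Finset.range (m + 2), (Nat.choose (m + 1) k : ℂ) * a k =
      ∑ k ∈ Finset.range (m + 1), (Nat.choose m k : ℂ) * a k +
        ∑ k ∈ Finset.range (m + 1), (Nat.choose m k : ℂ) * a (k + 1) := by
  rw [Finset.sum_range_succ' (fun k => (Nat.choose (m + 1) k : ℂ) * a k)]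
  have h1 : ∀ k, (Nat.choose (m + 1) (k + 1) : ℂ) * a (k + 1) =
      (Nat.choose m k : ℂ) * a (k + 1) + (Nat.choose m (k + 1) : ℂ) * a (k + 1) := by
    intro k
    rw [Nat.choose_succ_succ]
    push_cast
    ring
  rw [Finset.sum_congr rfl (fun k _ => h1 k), Finset.sum_add_distrib]
  have h2 : ∑ k ∈ Finset.range (m + 1), (Nat.choose m (k + 1) : ℂ) * a (k + 1) +
      (Nat.choose (m + 1) 0 : ℂ) * a 0 = ∑ k ∈ Finset.range (m + 1), (Nat.choose m k : ℂ) * a k := by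
    rw [show (Nat.choose (m+1) 0 : ℂ) = (Nat.choose m 0 : ℂ) by norm_num]
    rw [← Finset.sum_range_succ' (fun k => (Nat.choose m k : ℂ) * a k), Finset.sum_range_succ]
    simp [Nat.choose_eq_zero_of_lt (Nat.lt_succ_self m)]
  rw [add_assoc, h2]
  ring

lemma key : ∀ m r : ℕ,
    ∑ k ∈ Finset.range (m + 1), (Nat.choose m k : ℂ) * ((-1) ^ k * (k.factorial : ℂ) / poch (1 / 2) (r + k)) =
      ((r : ℂ) - 1 / 2) / (((m : ℂ) + r - 1 / 2) * poch (1 / 2) r) := by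
  intro m
  induction m with
  | zero =>
    intro r
    rw [Finset.sum_range_one]
    simp only [Nat.choose_self, Nat.cast_one, pow_zero, Nat.factorial_zero, Nat.add_zero,
      Nat.cast_zero, zero_add]
    have h1 : ((r : ℂ) * 2 - 1) ≠ 0 := by
      have h := nat_sub_half_ne r; intro hc; apply h; linear_combination hc / 2
    field_simp [poch_half_ne r, nat_sub_half_ne r]
    have h' : (2 * (r : ℂ) - 1) ≠ 0 := by intro hc; apply h1; linear_combination hc
    rw [div_eq_div_iff (poch_half_ne r) (mul_ne_zero (poch_half_ne r) h')]; ring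
  | succ m ih =>
    intro r
    have key_step : ∀ k : ℕ,
        ((-1 : ℂ)) ^ (k + 1) * ((k + 1).factorial : ℂ) / poch (1 / 2) (r + (k + 1)) =
          -((-1) ^ k * (k.factorial : ℂ) / poch (1 / 2) (r + k)) +
            ((r : ℂ) - 1 / 2) * ((-1) ^ k * (k.factorial : ℂ) / poch (1 / 2) ((r + 1) + k)) := by
      intro k
      have e1 : r + (k + 1) = (r + k) + 1 := by ring
      have e2 : (r + 1) + k = (r + k) + 1 := by ring
      rw [e1, e2, poch_succ]
      have hp := poch_half_ne (r + k)
      have hf : ((1 : ℂ) / 2 + ((r + k : ℕ) : ℂ)) ≠ 0 := by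
        rw [add_comm]; exact nat_add_half_ne (r + k)
      have hrw : ∀ B : ℂ, B / poch (1 / 2) (r + k) =
          B * ((1 : ℂ) / 2 + ((r + k : ℕ) : ℂ)) /
            (poch (1 / 2) (r + k) * ((1 : ℂ) / 2 + ((r + k : ℕ) : ℂ))) := by
        intro B; rw [mul_div_mul_right _ _ hf]
      rw [hrw ((-1 : ℂ) ^ k * (k.factorial : ℂ)), ← neg_div, ← mul_div_assoc, ← add_div]
      have hnum : ((-1 : ℂ)) ^ (k + 1) * (((k + 1).factorial : ℕ) : ℂ) =
          -((-1 : ℂ) ^ k * (k.factorial : ℂ) * ((1 : ℂ) / 2 + ((r + k : ℕ) : ℂ))) +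
            ((r : ℂ) - 1 / 2) * ((-1) ^ k * (k.factorial : ℂ)) := by
        rw [Nat.factorial_succ]; push_cast; ring
      rw [hnum]
    rw [pascal_sum m (fun k => (-1) ^ k * (k.factorial : ℂ) / poch (1 / 2) (r + k))]
    have h2 : ∑ k ∈ Finset.range (m + 1), (Nat.choose m k : ℂ) *
        ((-1) ^ (k + 1) * ((k + 1).factorial : ℂ) / poch (1 / 2) (r + (k + 1))) =
        -(((r : ℂ) - 1 / 2) / (((m : ℂ) + r - 1 / 2) * poch (1 / 2) r)) +
          ((r : ℂ) - 1 / 2) * ((((r + 1 : ℕ) : ℂ)) - 1 / 2 ) /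
            (((m : ℂ) + ((r + 1 : ℕ) : ℂ) - 1 / 2) * poch (1 / 2) (r + 1)) := by
      rw [Finset.sum_congr rfl (fun k _ => by rw [key_step k])]
      have expand : ∀ k : ℕ, (Nat.choose m k : ℂ) *
          (-((-1) ^ k * (k.factorial : ℂ) / poch (1 / 2) (r + k)) +
            ((r : ℂ) - 1 / 2) * ((-1) ^ k * (k.factorial : ℂ) / poch (1 / 2) ((r + 1) + k))) =
          -((Nat.choose m k : ℂ) * ((-1) ^ k * (k.factorial : ℂ) / poch (1 / 2) (r + k))) +
            ((r : ℂ) - 1 / 2) * ((Nat.choose m k : ℂ) *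
              ((-1) ^ k * (k.factorial : ℂ) / poch (1 / 2) ((r + 1) + k))) := by
        intro k; ring
      rw [Finset.sum_congr rfl (fun k _ => expand k), Finset.sum_add_distrib,
        Finset.sum_neg_distrib, ← Finset.mul_sum, ih r, ih (r + 1)]
      ring
    rw [h2, ih r, add_neg_cancel_left]
    have hC : ((1 : ℂ) / 2 + (r : ℂ)) ≠ 0 := by
      rw [add_comm]; exact nat_add_half_ne r
    have e3 : (((r + 1 : ℕ) : ℂ)) - 1 / 2 = (1 : ℂ) / 2 + (r : ℂ) := by push_cast; ring
    rw [e3, poch_succ]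
    have e4 : ((m : ℂ) + ((r + 1 : ℕ) : ℂ) - 1 / 2) * (poch (1 / 2) r * ((1 : ℂ) / 2 + (r : ℂ))) =
        ((((m + 1 : ℕ) : ℂ)) + (r : ℂ) - 1 / 2) * poch (1 / 2) r * ((1 : ℂ) / 2 + (r : ℂ)) := by
      push_cast; ring
    rw [e4, mul_div_mul_right _ _ hC]

lemma poch_half_eq (n : ℕ) : poch (1 / 2) n * (4 ^ n * (n.factorial : ℂ)) = ((2 * n).factorial : ℂ) := by
  induction n with
  | zero => simp [poch_zero]
  | succ k ih =>
    have e : 2 * (k + 1) = (2 * k + 1) + 1 := by ring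
    rw [e, Nat.factorial_succ, Nat.factorial_succ, Nat.factorial_succ, poch_succ]
    push_cast
    push_cast at ih
    linear_combination (4 * ((k:ℂ) + 1) * (1/2 + k)) * ih

lemma poch_neg_half (m : ℕ) : poch (-(1 / 2)) m * ((m : ℂ) - 1 / 2) = -(1 / 2) * poch (1 / 2) m := by
  induction m with
  | zero => simp [poch_zero]
  | succ k ih =>
    rw [poch_succ, poch_succ]
    push_cast
    linear_combination (1 / 2 + (k : ℂ)) * ih

lemma fact_ineq (n : ℕ) : 2 ^ n * (n.factorial * n.factorial) ≤ (2 * n).factorial := by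
  induction n with
  | zero => simp
  | succ k ih =>
    have e : 2 * (k + 1) = 2 * k + 1 + 1 := by ring
    have e2 : (2 * k + 1 + 1).factorial = (2 * k + 2) * ((2 * k + 1) * (2 * k).factorial) := by
      rw [Nat.factorial_succ, Nat.factorial_succ]
    rw [e, e2, Nat.factorial_succ]
    calc 2 ^ (k + 1) * ((k + 1) * k.factorial * ((k + 1) * k.factorial))
        = (2 * (k + 1)) * ((k + 1) * (2 ^ k * (k.factorial * k.factorial))) := by ring
      _ ≤ (2 * (k + 1)) * ((2 * k + 1) * (2 * k).factorial) := by
          exact Nat.mul_le_mul_left _ (Nat.mul_le_mul (by omega) ih)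
      _ = (2 * k + 2) * ((2 * k + 1) * (2 * k).factorial) := by ring

lemma fact_ineq' (n : ℕ) : n.factorial * n.factorial ≤ (2 * n).factorial :=
  le_trans (Nat.le_mul_of_pos_left _ (pow_pos (by norm_num : (0:ℕ) < 2) n)) (fact_ineq n)

lemma poch_half_formula (n : ℕ) :
    poch (1 / 2) n = ((2 * n).factorial : ℂ) / ((4 : ℂ) ^ n * (n.factorial : ℂ)) := by
  have h4 : ((4 : ℂ) ^ n * (n.factorial : ℂ)) ≠ 0 := by
    apply mul_ne_zero (pow_ne_zero _ (by norm_num))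
    exact_mod_cast Nat.factorial_ne_zero n
  rw [eq_div_iff h4]
  exact poch_half_eq n

lemma norm_poch_half (n : ℕ) :
    ‖poch (1 / 2) n‖ = ((2 * n).factorial : ℝ) / ((4 : ℝ) ^ n * (n.factorial : ℝ)) := by
  rw [poch_half_formula]
  rw [norm_div, norm_mul, norm_pow]
  simp [Complex.norm_natCast]

set_option maxHeartbeats 1000000 in
lemma summable_B (w : ℂ) : Summable (fun n => ‖(-1 : ℂ) ^ n * w ^ n / poch (1 / 2) n‖) := by
  refine Summable.of_nonneg_of_le (fun n => norm_nonneg _) (fun n => ?_)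
    (Real.summable_pow_div_factorial (2 * ‖w‖))
  ·
    rw [norm_div, norm_mul, norm_pow, norm_pow, norm_neg, norm_one, one_pow, one_mul,
      norm_poch_half]
    have hfq : (0 : ℝ) < (n.factorial : ℝ) := by exact_mod_cast Nat.factorial_pos n
    have h2q : (0 : ℝ) < ((2 * n).factorial : ℝ) := by exact_mod_cast Nat.factorial_pos (2 * n)
    rw [div_div_eq_mul_div, div_le_div_iff₀ h2q hfq, mul_pow]
    have hcast : (2 : ℝ) ^ n * ((n.factorial : ℝ) * (n.factorial : ℝ)) ≤ ((2 * n).factorial : ℝ) := by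
      exact_mod_cast fact_ineq n
    have hwn : (0 : ℝ) ≤ ‖w‖ ^ n := by positivity
    have h2p : (0 : ℝ) < 2 ^ n := by positivity
    calc ‖w‖ ^ n * ((4 : ℝ) ^ n * (n.factorial : ℝ)) * (n.factorial : ℝ)
        = (2 : ℝ) ^ n * ((2 : ℝ) ^ n * ((n.factorial : ℝ) * (n.factorial : ℝ))) * ‖w‖ ^ n := by
          rw [show (4 : ℝ) = 2 * 2 by norm_num, mul_pow]; ring
      _ ≤ (2 : ℝ) ^ n * ((2 * n).factorial : ℝ) * ‖w‖ ^ n := by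
          apply mul_le_mul_of_nonneg_right _ hwn
          exact mul_le_mul_of_nonneg_left hcast h2p.le
      _ = (2 : ℝ) ^ n * ‖w‖ ^ n * ((2 * n).factorial : ℝ) := by ring

lemma central (w : ℂ) :
    ∑' n : ℕ, ((-1 : ℂ) ^ n * w ^ n / poch (1 / 2) n) = Complex.exp (-w) * oneF1 (-(1 / 2)) (1 / 2) w := by
  have hsE : Summable (fun k : ℕ => ‖w ^ k / (k.factorial : ℂ)‖) := by
    apply Summable.congr (Real.summable_pow_div_factorial ‖w‖)
    intro k
    rw [norm_div, norm_pow, Complex.norm_natCast]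
  have hexp : Complex.exp w = ∑' k : ℕ, w ^ k / (k.factorial : ℂ) := by
    rw [Complex.exp_eq_exp_ℂ, NormedSpace.exp_eq_tsum_div]
  have hcauchy := tsum_mul_tsum_eq_tsum_sum_range_of_summable_norm hsE (summable_B w)
  have coeff : ∀ m : ℕ, ∑ k ∈ Finset.range (m + 1),
      (w ^ k / (k.factorial : ℂ)) * ((-1) ^ (m - k) * w ^ (m - k) / poch (1 / 2) (m - k)) =
      poch (-(1 / 2)) m * w ^ m / (poch (1 / 2) m * (m.factorial : ℂ)) := by
    intro m
    have hfm : ((m).factorial : ℂ) ≠ 0 := by exact_mod_cast Nat.factorial_ne_zero m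
    have hm := nat_sub_half_ne m
    have hpm := poch_half_ne m
    rw [← Finset.sum_range_reflect]
    have step : ∀ k ∈ Finset.range (m + 1),
        (w ^ (m + 1 - 1 - k) / ((m + 1 - 1 - k).factorial : ℂ)) *
          ((-1) ^ (m - (m + 1 - 1 - k)) * w ^ (m - (m + 1 - 1 - k)) / poch (1 / 2) (m - (m + 1 - 1 - k))) =
        (w ^ m / (m.factorial : ℂ)) *
          ((Nat.choose m k : ℂ) * ((-1) ^ k * (k.factorial : ℂ) / poch (1 / 2) (0 + k))) := by
      intro k hk
      have hk' : k ≤ m := Nat.lt_succ_iff.mp (Finset.mem_range.mp hk)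
      have e1 : m + 1 - 1 - k = m - k := by omega
      have e2 : m - (m - k) = k := by omega
      rw [e1, e2, Nat.zero_add]
      have hw : w ^ (m - k) * w ^ k = w ^ m := by
        rw [← pow_add, Nat.sub_add_cancel hk']
      have hfac : ((Nat.choose m k : ℕ) : ℂ) * (k.factorial : ℂ) * ((m - k).factorial : ℂ) =
          (m.factorial : ℂ) := by
        exact_mod_cast congrArg (Nat.cast : ℕ → ℂ) (Nat.choose_mul_factorial_mul_factorial hk')
      have hne1 : ((m - k).factorial : ℂ) ≠ 0 := by exact_mod_cast Nat.factorial_ne_zero (m - k)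
      have hne3 := poch_half_ne k
      rw [div_mul_div_comm]
      have hr : (w ^ m / (m.factorial : ℂ)) *
          ((Nat.choose m k : ℂ) * ((-1) ^ k * (k.factorial : ℂ) / poch (1 / 2) k)) =
          (w ^ m * ((Nat.choose m k : ℂ) * ((-1) ^ k * (k.factorial : ℂ)))) /
            ((m.factorial : ℂ) * poch (1 / 2) k) := by
        rw [mul_div_assoc', div_mul_div_comm]
      rw [hr, div_eq_div_iff (mul_ne_zero hne1 hne3) (mul_ne_zero hfm hne3)]
      linear_combination ((-1 : ℂ) ^ k * (m.factorial : ℂ) * poch (1 / 2) k) * hw -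
        ((-1 : ℂ) ^ k * w ^ m * poch (1 / 2) k) * hfac
    rw [Finset.sum_congr rfl step, ← Finset.mul_sum, key m 0]
    have h0 : ((((0 : ℕ) : ℂ)) - 1 / 2) / ((((m : ℕ) : ℂ) + ((0 : ℕ) : ℂ) - 1 / 2) * poch (1 / 2) 0) =
        -(1 / 2) / (((m : ℂ)) - 1 / 2) := by
      rw [poch_zero]; push_cast; ring_nf
    rw [h0, div_mul_div_comm, div_eq_div_iff (mul_ne_zero hfm hm) (mul_ne_zero hpm hfm)]
    linear_combination (-(w ^ m) * (m.factorial : ℂ)) * poch_neg_half m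
  have P : Complex.exp w * (∑' n : ℕ, ((-1 : ℂ) ^ n * w ^ n / poch (1 / 2) n)) =
      oneF1 (-(1 / 2)) (1 / 2) w := by
    rw [hexp, hcauchy, tsum_congr coeff]
    rfl
  rw [← P, ← mul_assoc, ← Complex.exp_add, neg_add_cancel, Complex.exp_zero, one_mul]

lemma Iable {b : ℝ} (hb : 0 < b) (n : ℕ) :
    IntegrableOn (fun t : ℝ => t ^ (2 * n + 1) * Real.exp (-b * t ^ 2)) (Ioi 0) := by
  have h := integrableOn_rpow_mul_exp_neg_mul_sq hb (s := ((2 * n + 1 : ℕ) : ℝ))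
    (lt_of_lt_of_le neg_one_lt_zero (Nat.cast_nonneg _))
  refine h.congr_fun (fun x hx => ?_) measurableSet_Ioi
  simp only [Real.rpow_natCast]

lemma Ival {b : ℝ} (hb : 0 < b) (n : ℕ) :
    ∫ t in Ioi (0 : ℝ), t ^ (2 * n + 1) * Real.exp (-b * t ^ 2) =
      (n.factorial : ℝ) / (2 * b ^ (n + 1)) := by
  have h := integral_comp_rpow_Ioi_of_pos
    (g := fun y : ℝ => y ^ ((n : ℝ)) * Real.exp (-(b * y)) / 2) (p := 2) two_pos
  have hL : ∫ x in Ioi (0 : ℝ),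
      ((2 : ℝ) * x ^ ((2 : ℝ) - 1)) • ((x ^ (2 : ℝ)) ^ ((n : ℝ)) * Real.exp (-(b * x ^ (2 : ℝ))) / 2) =
      ∫ t in Ioi (0 : ℝ), t ^ (2 * n + 1) * Real.exp (-b * t ^ 2) := by
    refine setIntegral_congr_fun measurableSet_Ioi (fun x hx => ?_)
    have hx0 : (0 : ℝ) < x := hx
    have hx2 : x ^ (2 : ℝ) = x ^ 2 := by
      rw [show (2 : ℝ) = ((2 : ℕ) : ℝ) by norm_num, Real.rpow_natCast]
    have h21 : (2 : ℝ) - 1 = 1 := by norm_num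
    rw [smul_eq_mul, h21, Real.rpow_one, hx2, Real.rpow_natCast, ← pow_mul, neg_mul]
    ring
  have hR : ∫ y in Ioi (0 : ℝ), y ^ ((n : ℝ)) * Real.exp (-(b * y)) / 2 =
      (n.factorial : ℝ) / (2 * b ^ (n + 1)) := by
    rw [integral_div]
    have h1 := Real.integral_rpow_mul_exp_neg_mul_Ioi (show (0:ℝ) < (n : ℝ) + 1 by positivity) hb
    rw [add_sub_cancel_right] at h1
    rw [h1, Real.Gamma_nat_eq_factorial,
      show ((n : ℝ) + 1) = ((n + 1 : ℕ) : ℝ) by push_cast; ring, Real.rpow_natCast]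
    rw [one_div, inv_pow]
    ring
  rw [← hL, h, hR]

theorem stmt18 (α : ℝ) (hα : 0 < α) (z : ℂ) :
    (∫ t in Set.Ioi (0 : ℝ),
        (t : ℂ) * Complex.exp (-(π : ℂ) * α ^ 2 * t ^ 2) *
          Complex.cos ((Real.sqrt π : ℂ) * α * t * z)) =
    Complex.exp (-z ^ 2 / 4) / (2 * π * α ^ 2) * oneF1 (-(1 / 2)) (1 / 2) (z ^ 2 / 4) := by
  have hπ := Real.pi_pos
  set a : ℝ := π * α ^ 2 with ha_def
  have ha : 0 < a := by positivity
  set w : ℂ := z ^ 2 / 4 with hw_def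
  set c : ℕ → ℂ := fun n => (-1 : ℂ) ^ n * (a : ℂ) ^ n * z ^ (2 * n) / ((2 * n).factorial : ℂ)
    with hc_def
  set F : ℕ → ℝ → ℂ := fun n t => c n * ((t ^ (2 * n + 1) * Real.exp (-a * t ^ 2) : ℝ) : ℂ)
    with hF_def
  -- pointwise expansion
  have hexp_eq : ∀ t : ℝ, Complex.exp (-(π : ℂ) * α ^ 2 * t ^ 2) =
      ((Real.exp (-a * t ^ 2) : ℝ) : ℂ) := by
    intro t
    rw [Complex.ofReal_exp]
    congr 1
    rw [ha_def]; push_cast; ring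
  have hpt : ∀ t : ℝ, (t : ℂ) * Complex.exp (-(π : ℂ) * α ^ 2 * t ^ 2) *
      Complex.cos ((Real.sqrt π : ℂ) * α * t * z) = ∑' n, F n t := by
    intro t
    have hcos := Complex.hasSum_cos ((Real.sqrt π : ℂ) * α * t * z)
    have hmul := hcos.mul_left ((t : ℂ) * Complex.exp (-(π : ℂ) * α ^ 2 * t ^ 2))
    rw [← hmul.tsum_eq]
    refine tsum_congr (fun n => ?_)
    have h0 : (Real.sqrt π * α * t) ^ 2 = a * t ^ 2 := by
      have hs := Real.sq_sqrt hπ.le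
      rw [ha_def, mul_pow, mul_pow, hs]
    have h2 : (Real.sqrt π * α * t) ^ (2 * n) = a ^ n * t ^ (2 * n) := by
      rw [pow_mul, h0, mul_pow, ← pow_mul]
    have hθ : ((Real.sqrt π : ℂ) * α * t * z) ^ (2 * n) =
        ((a ^ n * t ^ (2 * n) : ℝ) : ℂ) * z ^ (2 * n) := by
      have h1 : ((Real.sqrt π : ℂ) * α * t * z) ^ (2 * n) =
          (((Real.sqrt π * α * t : ℝ) : ℂ)) ^ (2 * n) * z ^ (2 * n) := by
        push_cast; ring
      rw [h1, ← Complex.ofReal_pow, h2]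
    rw [hθ, hexp_eq t, hF_def, hc_def]
    push_cast
    ring
  -- integrability
  have hFint : ∀ n : ℕ, Integrable (F n) (volume.restrict (Ioi (0 : ℝ))) := by
    intro n
    exact ((Iable ha n).ofReal).const_mul (c n)
  -- value of each integral
  have hIval : ∀ n : ℕ, ∫ t in Ioi (0 : ℝ), F n t =
      c n * (((n.factorial : ℝ) / (2 * a ^ (n + 1)) : ℝ) : ℂ) := by
    intro n
    simp only [hF_def]
    rw [MeasureTheory.integral_const_mul]
    congr 1
    rw [← Ival ha n]
    exact integral_ofReal
  -- norms
  have hnorm : ∀ n : ℕ, (∫ t in Ioi (0 : ℝ), ‖F n t‖) =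
      ‖c n‖ * ((n.factorial : ℝ) / (2 * a ^ (n + 1))) := by
    intro n
    have : ∀ t ∈ Ioi (0 : ℝ), ‖F n t‖ = ‖c n‖ * (t ^ (2 * n + 1) * Real.exp (-a * t ^ 2)) := by
      intro t ht
      simp only [hF_def]
      have ht' : (0 : ℝ) < t := ht
      rw [norm_mul, Complex.norm_real, Real.norm_eq_abs,
        abs_of_nonneg (mul_nonneg (pow_nonneg ht'.le _) (Real.exp_nonneg _))]
    rw [setIntegral_congr_fun measurableSet_Ioi this, MeasureTheory.integral_const_mul, Ival ha n]
  have hnormc : ∀ n : ℕ, ‖c n‖ = a ^ n * ‖z‖ ^ (2 * n) / ((2 * n).factorial : ℝ) := by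
    intro n
    simp only [hc_def]
    rw [norm_div, norm_mul, norm_mul, norm_pow, norm_pow, norm_pow, norm_neg, norm_one, one_pow,
      one_mul, Complex.norm_real, Real.norm_eq_abs, abs_of_nonneg ha.le, Complex.norm_natCast]
  -- summability of integrals of norms
  have hsumnorm : Summable (fun n => ∫ t in Ioi (0 : ℝ), ‖F n t‖) := by
    refine Summable.of_nonneg_of_le
      (fun n => integral_nonneg (fun t => norm_nonneg _)) (fun n => ?_)
      ((Real.summable_pow_div_factorial (‖z‖ ^ 2)).mul_right (1 / (2 * a)))
    rw [hnorm n, hnormc n]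
    have h2n : (0 : ℝ) < ((2 * n).factorial : ℝ) := by exact_mod_cast Nat.factorial_pos _
    have hn : (0 : ℝ) < (n.factorial : ℝ) := by exact_mod_cast Nat.factorial_pos _
    have hfi : (n.factorial : ℝ) * (n.factorial : ℝ) ≤ ((2 * n).factorial : ℝ) := by
      exact_mod_cast fact_ineq' n
    have hz2 : ‖z‖ ^ (2 * n) = (‖z‖ ^ 2) ^ n := by rw [← pow_mul]
    rw [hz2, div_mul_div_comm, div_mul_div_comm]
    rw [div_le_div_iff₀ (by positivity) (by positivity)]
    calc a ^ n * (‖z‖ ^ 2) ^ n * (n.factorial : ℝ) * ((n.factorial : ℝ) * (2 * a))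
        = ((‖z‖ ^ 2) ^ n * (2 * a ^ (n + 1))) * ((n.factorial : ℝ) * (n.factorial : ℝ)) := by
          rw [pow_succ]; ring
      _ ≤ ((‖z‖ ^ 2) ^ n * (2 * a ^ (n + 1))) * ((2 * n).factorial : ℝ) := by
          exact mul_le_mul_of_nonneg_left hfi (by positivity)
      _ = (‖z‖ ^ 2) ^ n * 1 * (((2 * n).factorial : ℝ) * (2 * a ^ (n + 1))) := by ring
  have hHS := hasSum_integral_of_summable_integral_norm hFint hsumnorm
  have hint_eq : (∫ t in Ioi (0 : ℝ),
      (t : ℂ) * Complex.exp (-(π : ℂ) * α ^ 2 * t ^ 2) *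
        Complex.cos ((Real.sqrt π : ℂ) * α * t * z)) = ∫ t in Ioi (0 : ℝ), ∑' n, F n t :=
    integral_congr_ae (Filter.Eventually.of_forall fun t => hpt t)
  rw [hint_eq, ← hHS.tsum_eq, tsum_congr (fun n => hIval n)]
  have haC : ((a : ℝ) : ℂ) = (π : ℂ) * (α : ℂ) ^ 2 := by rw [ha_def]; push_cast; ring
  have hπc : ((π : ℝ) : ℂ) ≠ 0 := Complex.ofReal_ne_zero.mpr hπ.ne'
  have hαc : ((α : ℝ) : ℂ) ≠ 0 := Complex.ofReal_ne_zero.mpr hα.ne'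
  have hterm : ∀ n : ℕ, c n * (((n.factorial : ℝ) / (2 * a ^ (n + 1)) : ℝ) : ℂ) =
      (1 / (2 * (π : ℂ) * (α : ℂ) ^ 2)) * ((-1 : ℂ) ^ n * w ^ n / poch (1 / 2) n) := by
    intro n
    have hz2n : z ^ (2 * n) = 4 ^ n * w ^ n := by
      rw [hw_def, pow_mul, ← mul_pow]
      congr 1
      ring
    have hfn : ((n.factorial : ℕ) : ℂ) ≠ 0 := by exact_mod_cast Nat.factorial_ne_zero n
    have h4 : ((4 : ℂ)) ^ n ≠ 0 := pow_ne_zero _ (by norm_num)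
    have hA : ((a : ℝ) : ℂ) ≠ 0 := Complex.ofReal_ne_zero.mpr ha.ne'
    have hD1 : (((2 * n).factorial : ℂ)) * (2 * ((a : ℝ) : ℂ) ^ (n + 1)) ≠ 0 := by
      refine mul_ne_zero ?_ (mul_ne_zero two_ne_zero (pow_ne_zero _ hA))
      exact_mod_cast Nat.factorial_ne_zero (2 * n)
    have hD2 : (2 * (π : ℂ) * (α : ℂ) ^ 2) * poch (1 / 2) n ≠ 0 := by
      refine mul_ne_zero (mul_ne_zero (mul_ne_zero two_ne_zero hπc) (pow_ne_zero _ hαc))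
        (poch_half_ne n)
    have e1 : c n * (((n.factorial : ℝ) / (2 * a ^ (n + 1)) : ℝ) : ℂ) =
        ((-1 : ℂ) ^ n * ((a : ℝ) : ℂ) ^ n * z ^ (2 * n) * (n.factorial : ℂ)) /
          (((2 * n).factorial : ℂ) * (2 * ((a : ℝ) : ℂ) ^ (n + 1))) := by
      simp only [hc_def]
      push_cast
      rw [div_mul_div_comm]
    have e2 : (1 / (2 * (π : ℂ) * (α : ℂ) ^ 2)) * ((-1 : ℂ) ^ n * w ^ n / poch (1 / 2) n) =
        ((-1 : ℂ) ^ n * w ^ n) / ((2 * (π : ℂ) * (α : ℂ) ^ 2) * poch (1 / 2) n) := by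
      rw [div_mul_div_comm, one_mul]
    rw [e1, e2, div_eq_div_iff hD1 hD2, hz2n, haC, ← poch_half_eq n]
    ring
  rw [tsum_congr hterm, tsum_mul_left, central w,
    show -w = -z ^ 2 / 4 by rw [hw_def]; ring]
  ring
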